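/- Define f : ℝ³ → ℝ³ by f(x, y, z) = (min(2y, 0) + min(2x + 2y, 0) + z + x, min(2x, 0) + min(2x, 2y) + z + y, min(2x, 0) + min(2x + 2y, 0) + z + y). Then f(−x, −y, z + 4x + 4y) = f(x, y, z) for all (x, y, z) ∈ ℝ³; in particular f is not injective. Moreover, at every point p ∈ ℝ³ at which f is (Fréchet) differentiable, det(Df(p)) = 2. -/

import Mathlib

open Filter Topology

/-- `Eu n` is the Euclidean space `ℝⁿ`. -/
noncomputable abbrev Eu (n : ℕ) := EuclideanSpace ℝ (Fin n)

/-- The point of `ℝ²` with coordinates `(x, y)`. -/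
noncomputable def v2 (x y : ℝ) : Eu 2 := (WithLp.equiv 2 (Fin 2 → ℝ)).symm ![x, y]

/-- The point of `ℝ³` with coordinates `(x, y, z)`. -/
noncomputable def v3 (x y z : ℝ) : Eu 3 := (WithLp.equiv 2 (Fin 3 → ℝ)).symm ![x, y, z]

lemma v3_eta (q : Eu 3) : v3 (q 0) (q 1) (q 2) = q := by
  ext i; fin_cases i <;> rfl

lemma v3_congr {A B C A' B' C' : ℝ} (h1 : A = A') (h2 : B = B') (h3 : C = C') :
    v3 A B C = v3 A' B' C' := by rw [h1, h2, h3]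

lemma neg_min (a : ℝ) : min (-a) 0 = min a 0 - a := by
  rcases le_total a 0 with h | h
  · rw [min_eq_right (by linarith), min_eq_left h]; ring
  · rw [min_eq_left (by linarith), min_eq_right h]; ring

lemma neg_min2 (a b : ℝ) : min (-a) (-b) = min a b - a - b := by
  rcases le_total a b with h | h
  · rw [min_eq_right (by linarith), min_eq_left h]; ring
  · rw [min_eq_left (by linarith), min_eq_right h]; ring

lemma nmin : ¬ DifferentiableAt ℝ (fun t : ℝ => min (2*t) 0) 0 := by
  intro h
  apply not_differentiableAt_abs_zero
  have e : (abs : ℝ → ℝ) = fun t => t - min (2*t) 0 := by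
    funext t
    rcases le_total t 0 with ht | ht
    · rw [min_eq_left (by linarith), abs_of_nonpos ht]; ring
    · rw [min_eq_right (by linarith), abs_of_nonneg ht]; ring
  rw [e]
  exact differentiable_id.differentiableAt.sub h

lemma min_ev (c : ℝ) (hc : c ≠ 0) : DifferentiableAt ℝ (fun t : ℝ => min (2*t) (2*c)) 0 := by
  rcases hc.lt_or_gt with h | h
  · have ev : ∀ᶠ t in 𝓝 (0:ℝ), min (2*t) (2*c) = 2*c := by
      filter_upwards [eventually_gt_nhds h] with t ht
      exact min_eq_right (by linarith)
    exact (differentiableAt_const (2*c)).congr_of_eventuallyEq ev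
  · have ev : ∀ᶠ t in 𝓝 (0:ℝ), min (2*t) (2*c) = 2*t := by
      filter_upwards [eventually_lt_nhds h] with t ht
      exact min_eq_left (by linarith)
    exact ((differentiableAt_id.const_mul 2) :
      DifferentiableAt ℝ (fun t : ℝ => 2*t) 0).congr_of_eventuallyEq ev

lemma hshift (u t : ℝ) : min (2*u + 2*t) 0 = min (2*t) (2*(-u)) + 2*u := by
  rcases le_total t (-u) with h | h
  · rw [min_eq_left (by linarith), min_eq_left (by linarith)]; ring
  · rw [min_eq_right (by linarith), min_eq_right (by linarith)]; ring

lemma min_shift_diff (u : ℝ) (hu : u ≠ 0) :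
    DifferentiableAt ℝ (fun t : ℝ => min (2*u + 2*t) 0) 0 := by
  have h := (min_ev (-u) (neg_ne_zero.2 hu)).add_const (2*u)
  have e : (fun t : ℝ => min (2*t) (2*(-u)) + 2*u) = fun t : ℝ => min (2*u + 2*t) 0 := by
    funext t; rw [hshift]
  rwa [e] at h

lemma ev_sign (u : Eu 3 → ℝ) (hu : Continuous u) (p : Eu 3) (h : u p ≠ 0) :
    ∃ s : ℝ, ((s = 1 ∧ 0 < u p) ∨ (s = -1 ∧ u p < 0)) ∧
      ∀ᶠ q in 𝓝 p, min (2 * u q) 0 = (1 - s) * u q := by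
  rcases h.lt_or_gt with hlt | hgt
  · refine ⟨-1, Or.inr ⟨rfl, hlt⟩, ?_⟩
    filter_upwards [hu.continuousAt.eventually (eventually_lt_nhds hlt)] with q hq
    rw [min_eq_left (by linarith)]; ring
  · refine ⟨1, Or.inl ⟨rfl, hgt⟩, ?_⟩
    filter_upwards [hu.continuousAt.eventually (eventually_gt_nhds hgt)] with q hq
    rw [min_eq_right (by linarith)]; ring

noncomputable def Mm (a b c d : ℝ) : Matrix (Fin 3) (Fin 3) ℝ :=
  !![2-a, 2-a-b, 1; 2-c-d, 2+d, 1; 2-c-a, 2-a, 1]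

noncomputable def Fmap (a b c d : ℝ) : Eu 3 →L[ℝ] Eu 3 :=
  LinearMap.toContinuousLinearMap (Matrix.toEuclideanLin (Mm a b c d))

lemma Fmap_det (a b c d : ℝ) :
    LinearMap.det ((Fmap a b c d).toLinearMap) = (Mm a b c d).det := by
  simp [Fmap, Matrix.toEuclideanLin_eq_toLin, LinearMap.det_toLin]

lemma Fmap_v3 (a b c d x y z : ℝ) : Fmap a b c d (v3 x y z) =
    v3 ((2-a)*x + (2-a-b)*y + z) ((2-c-d)*x + (2+d)*y + z) ((2-c-a)*x + (2-a)*y + z) := by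
  ext i
  fin_cases i <;>
    simp [Fmap, Mm, v3, Matrix.toEuclideanLin_apply, Matrix.mulVec, dotProduct,
      Fin.sum_univ_three] <;> ring

lemma Mm_det (a b c d : ℝ) (h : (a = b ∧ b = c) ∨ (c = d ∧ b = -d))
    (ha : a*a = 1) (hd : d*d = 1) : (Mm a b c d).det = 2 := by
  rw [Mm, Matrix.det_fin_three]
  simp [Matrix.vecHead, Matrix.vecTail]
  rcases h with ⟨h1, h2⟩ | ⟨h1, h2⟩ <;> subst h1 <;> subst h2 <;> nlinarith [ha, hd]

/-- The tropical polynomial map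
`f(x, y, z) = (min(2y, 0) + min(2x + 2y, 0) + z + x,
min(2x, 0) + min(2x, 2y) + z + y, min(2x, 0) + min(2x + 2y, 0) + z + y)`
satisfies `f(−x, −y, z + 4x + 4y) = f(x, y, z)` (so it is not injective), yet
`det Df(p) = 2` at every point `p` of differentiability. -/
theorem tropical_polynomial_space_counterexample
    (f : Eu 3 → Eu 3)
    (hf : ∀ x y z : ℝ, f (v3 x y z) =
      v3 (min (2 * y) 0 + min (2 * x + 2 * y) 0 + z + x)
         (min (2 * x) 0 + min (2 * x) (2 * y) + z + y)
         (min (2 * x) 0 + min (2 * x + 2 * y) 0 + z + y)) :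
    (∀ x y z : ℝ, f (v3 (-x) (-y) (z + 4 * x + 4 * y)) = f (v3 x y z)) ∧
    ¬ Function.Injective f ∧
    (∀ p : Eu 3, DifferentiableAt ℝ f p →
      LinearMap.det (fderiv ℝ f p).toLinearMap = 2) := by
  have part1 : ∀ x y z : ℝ, f (v3 (-x) (-y) (z + 4 * x + 4 * y)) = f (v3 x y z) := by
    intro x y z
    rw [hf, hf]
    refine v3_congr ?_ ?_ ?_
    · rw [show (2:ℝ) * -x + 2 * -y = -(2*x + 2*y) by ring, show (2:ℝ) * -y = -(2*y) by ring,
        neg_min, neg_min]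
      ring
    · rw [show (2:ℝ) * -x = -(2*x) by ring, show (2:ℝ) * -y = -(2*y) by ring,
        neg_min, neg_min2]
      ring
    · rw [show (2:ℝ) * -x + 2 * -y = -(2*x + 2*y) by ring, show (2:ℝ) * -x = -(2*x) by ring,
        neg_min, neg_min]
      ring
  refine ⟨part1, ?_, ?_⟩
  · intro hinj
    have h1 := hinj (part1 1 0 0)
    have h0 : (-1 : ℝ) = 1 := congrArg (fun q : Eu 3 => q 0) h1
    norm_num at h0
  · intro p hdiff
    -- directional differentiability
    have key : ∀ (E : Eu 3) (i : Fin 3),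
        DifferentiableAt ℝ (fun t : ℝ => f (p + t • E) i) 0 := by
      intro E i
      have hc : DifferentiableAt ℝ (fun t : ℝ => p + t • E) 0 :=
        (differentiableAt_const p).add (differentiableAt_id.smul_const E)
      have hp' : DifferentiableAt ℝ f ((fun t : ℝ => p + t • E) 0) := by simpa using hdiff
      exact ((EuclideanSpace.proj i).differentiableAt).comp _ (hp'.comp 0 hc)
    have hcurve0 : ∀ t : ℝ, p + t • (EuclideanSpace.single (0 : Fin 3) (1:ℝ))
        = v3 (p 0 + t) (p 1) (p 2) := by
      intro t; ext i; fin_cases i <;> simp [v3, EuclideanSpace.single_apply]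
    have hcurve1 : ∀ t : ℝ, p + t • (EuclideanSpace.single (1 : Fin 3) (1:ℝ))
        = v3 (p 0) (p 1 + t) (p 2) := by
      intro t; ext i; fin_cases i <;> simp [v3, EuclideanSpace.single_apply]
    -- x ≠ 0
    have hx : p 0 ≠ 0 := by
      intro h0
      have g := key (EuclideanSpace.single (0 : Fin 3) (1:ℝ)) 1
      have e : (fun t : ℝ => f (p + t • (EuclideanSpace.single (0 : Fin 3) (1:ℝ))) 1)
          = fun t : ℝ => min (2*(p 0 + t)) 0 + min (2*(p 0 + t)) (2*(p 1)) + p 2 + p 1 := by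
        funext t; rw [hcurve0 t, hf]; rfl
      rw [e, h0] at g
      simp only [zero_add] at g
      rcases eq_or_ne (p 1) 0 with h1 | h1
      · apply nmin
        have gg := (g.sub (differentiableAt_const (p 2 + p 1))).div_const 2
        have e2 : (fun t : ℝ =>
            (min (2*t) 0 + min (2*t) (2*(p 1)) + p 2 + p 1 - (p 2 + p 1)) / 2)
            = fun t : ℝ => min (2*t) 0 := by
          funext t; rw [h1, mul_zero]; ring
        rw [← e2]; exact gg
      · apply nmin
        have gg := (g.sub (min_ev (p 1) h1)).sub (differentiableAt_const (p 2 + p 1))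
        have e2 : (fun t : ℝ =>
            (min (2*t) 0 + min (2*t) (2*(p 1)) + p 2 + p 1) - min (2*t) (2*(p 1))
              - (p 2 + p 1)) = fun t : ℝ => min (2*t) 0 := by
          funext t; ring
        rw [← e2]; exact gg
    -- y ≠ 0
    have hy : p 1 ≠ 0 := by
      intro h1
      have g := key (EuclideanSpace.single (1 : Fin 3) (1:ℝ)) 0
      have e : (fun t : ℝ => f (p + t • (EuclideanSpace.single (1 : Fin 3) (1:ℝ))) 0)
          = fun t : ℝ => min (2*(p 1 + t)) 0 + min (2*(p 0) + 2*(p 1 + t)) 0 + p 2 + p 0 := by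
        funext t; rw [hcurve1 t, hf]; rfl
      rw [e, h1] at g
      simp only [zero_add] at g
      apply nmin
      have gg := (g.sub (min_shift_diff (p 0) hx)).sub (differentiableAt_const (p 2 + p 0))
      have e2 : (fun t : ℝ =>
          (min (2*t) 0 + min (2*(p 0) + 2*t) 0 + p 2 + p 0) - min (2*(p 0) + 2*t) 0
            - (p 2 + p 0)) = fun t : ℝ => min (2*t) 0 := by
        funext t; ring
      rw [← e2]; exact gg
    -- x + y ≠ 0
    have hxy : p 0 + p 1 ≠ 0 := by
      intro hs
      have g := key (EuclideanSpace.single (0 : Fin 3) (1:ℝ)) 2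
      have e : (fun t : ℝ => f (p + t • (EuclideanSpace.single (0 : Fin 3) (1:ℝ))) 2)
          = fun t : ℝ => min (2*(p 0) + 2*t) 0 + min (2*t) 0 + p 2 + p 1 := by
        funext t
        rw [hcurve0 t, hf]
        show min (2*(p 0 + t)) 0 + min (2*(p 0 + t) + 2*(p 1)) 0 + p 2 + p 1 = _
        rw [show (2*(p 0 + t) + 2*(p 1) : ℝ) = 2*t by linear_combination 2*hs,
          show (2*(p 0 + t) : ℝ) = 2*(p 0) + 2*t by ring]
      rw [e] at g
      apply nmin
      have gg := (g.sub (min_shift_diff (p 0) hx)).sub (differentiableAt_const (p 2 + p 1))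
      have e2 : (fun t : ℝ =>
          (min (2*(p 0) + 2*t) 0 + min (2*t) 0 + p 2 + p 1) - min (2*(p 0) + 2*t) 0
            - (p 2 + p 1)) = fun t : ℝ => min (2*t) 0 := by
        funext t; ring
      rw [← e2]; exact gg
    -- x - y ≠ 0
    have hxmy : p 0 - p 1 ≠ 0 := by
      intro hs
      have hp1 : p 1 = p 0 := by linarith
      have g := key (EuclideanSpace.single (0 : Fin 3) (1:ℝ)) 1
      have e : (fun t : ℝ => f (p + t • (EuclideanSpace.single (0 : Fin 3) (1:ℝ))) 1)
          = fun t : ℝ => min (2*(p 0) + 2*t) 0 + (min (2*t) 0 + 2*(p 0)) + p 2 + p 1 := by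
        funext t
        rw [hcurve0 t, hf]
        show min (2*(p 0 + t)) 0 + min (2*(p 0 + t)) (2*(p 1)) + p 2 + p 1 = _
        have hmin2 : min (2*(p 0 + t)) (2*(p 1)) = min (2*t) 0 + 2*(p 0) := by
          rw [hp1]
          rcases le_total t 0 with h | h
          · rw [min_eq_left (by linarith), min_eq_left (by linarith)]; ring
          · rw [min_eq_right (by linarith), min_eq_right (by linarith)]; ring
        rw [hmin2, show (2*(p 0 + t) : ℝ) = 2*(p 0) + 2*t by ring]
      rw [e] at g
      apply nmin
      have gg := (g.sub (min_shift_diff (p 0) hx)).sub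
        (differentiableAt_const (2*(p 0) + p 2 + p 1))
      have e2 : (fun t : ℝ =>
          (min (2*(p 0) + 2*t) 0 + (min (2*t) 0 + 2*(p 0)) + p 2 + p 1)
            - min (2*(p 0) + 2*t) 0 - (2*(p 0) + p 2 + p 1)) = fun t : ℝ => min (2*t) 0 := by
        funext t; ring
      rw [← e2]; exact gg
    -- signs
    obtain ⟨c, hcP, hC⟩ := ev_sign (fun q => q 0)
      (EuclideanSpace.proj (0 : Fin 3)).continuous p hx
    obtain ⟨b, hbP, hB⟩ := ev_sign (fun q => q 1)
      (EuclideanSpace.proj (1 : Fin 3)).continuous p hy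
    obtain ⟨a, haP, hA⟩ := ev_sign (fun q => q 0 + q 1)
      ((EuclideanSpace.proj (0 : Fin 3)).continuous.add
        (EuclideanSpace.proj (1 : Fin 3)).continuous) p hxy
    obtain ⟨d, hdP, hD⟩ := ev_sign (fun q => q 0 - q 1)
      ((EuclideanSpace.proj (0 : Fin 3)).continuous.sub
        (EuclideanSpace.proj (1 : Fin 3)).continuous) p hxmy
    have haa : a * a = 1 := by rcases haP with ⟨h, _⟩ | ⟨h, _⟩ <;> rw [h] <;> norm_num
    have hdd : d * d = 1 := by rcases hdP with ⟨h, _⟩ | ⟨h, _⟩ <;> rw [h] <;> norm_num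
    have hrel : (a = b ∧ b = c) ∨ (c = d ∧ b = -d) := by
      rcases haP with ⟨ha1, ha2⟩ | ⟨ha1, ha2⟩ <;>
        rcases hbP with ⟨hb1, hb2⟩ | ⟨hb1, hb2⟩ <;>
        rcases hcP with ⟨hc1, hc2⟩ | ⟨hc1, hc2⟩ <;>
        rcases hdP with ⟨hd1, hd2⟩ | ⟨hd1, hd2⟩ <;>
        first
          | (left; constructor <;> linarith)
          | (right; constructor <;> linarith)
    -- local equality with the linear map
    have hloc : f =ᶠ[𝓝 p] ⇑(Fmap a b c d) := by
      filter_upwards [hA, hB, hC, hD] with q eA eB eC eD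
      have hq : v3 (q 0) (q 1) (q 2) = q := v3_eta q
      have h1 : f q = v3 (min (2 * q 1) 0 + min (2 * q 0 + 2 * q 1) 0 + q 2 + q 0)
          (min (2 * q 0) 0 + min (2 * q 0) (2 * q 1) + q 2 + q 1)
          (min (2 * q 0) 0 + min (2 * q 0 + 2 * q 1) 0 + q 2 + q 1) := by
        conv_lhs => rw [← hq]
        exact hf (q 0) (q 1) (q 2)
      have h2 : Fmap a b c d q = v3 ((2-a)*(q 0) + (2-a-b)*(q 1) + q 2)
          ((2-c-d)*(q 0) + (2+d)*(q 1) + q 2) ((2-c-a)*(q 0) + (2-a)*(q 1) + q 2) := by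
        conv_lhs => rw [← hq]
        exact Fmap_v3 a b c d (q 0) (q 1) (q 2)
      rw [h1, h2]
      have eD' : min (2 * q 0) (2 * q 1) = (1 - d) * (q 0 - q 1) + 2 * q 1 := by
        have : min (2 * q 0) (2 * q 1) = min (2 * (q 0 - q 1)) 0 + 2 * q 1 := by
          rcases le_total (q 0) (q 1) with h | h
          · rw [min_eq_left (by linarith), min_eq_left (by linarith)]; ring
          · rw [min_eq_right (by linarith), min_eq_right (by linarith)]; ring
        rw [this, eD]
      have eA' : min (2 * q 0 + 2 * q 1) 0 = (1 - a) * (q 0 + q 1) := by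
        rw [show (2 * q 0 + 2 * q 1 : ℝ) = 2 * (q 0 + q 1) by ring, eA]
      refine v3_congr ?_ ?_ ?_
      · rw [eA', eB]; ring
      · rw [eC, eD']; ring
      · rw [eA', eC]; ring
    have hder : HasFDerivAt f (Fmap a b c d) p :=
      (Fmap a b c d).hasFDerivAt.congr_of_eventuallyEq hloc
    rw [hder.fderiv, Fmap_det, Mm_det a b c d hrel haa hdd]
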